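/- Let x be a nilpotent endomorphism of an n-dimensional k-vector space with Jordan basis {v_{ij}} and Jordan type λ. For y commuting with x, the determinant of y equals the product over distinct part sizes l_h of λ (with multiplicity n_{l_h}) of det((c_{i,λ_i}^{r,λ_r}(y))_{i,r ∈ I_h})^{l_h}, where I_h = {i : λ_i = l_h}. In particular, y is invertible if and only if each matrix (c_{i,λ_i}^{r,λ_r}(y))_{i,r ∈ I_h} is invertible. -/

import Mathlib

open Finset

section Aux

variable {k : Type*} [Field k] {V : Type*} [AddCommGroup V] [Module k V]
variable {m : ℕ} {d nh : Fin m → ℕ}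

private lemma sig_eq_iff {h h' : Fin m} {i : Fin (nh h)} {i' : Fin (nh h')}
    {j : Fin (d h)} {j' : Fin (d h')} :
    (⟨h, (i, j)⟩ : Σ h : Fin m, Fin (nh h) × Fin (d h)) = ⟨h', (i', j')⟩ ↔
      h = h' ∧ (i : ℕ) = (i' : ℕ) ∧ (j : ℕ) = (j' : ℕ) := by
  constructor
  · intro e
    cases e
    exact ⟨rfl, rfl, rfl⟩
  · rintro ⟨rfl, hi, hj⟩
    obtain rfl : i = i' := Fin.ext hi
    obtain rfl : j = j' := Fin.ext hj
    rfl

private lemma pow_apply_basis (x : Module.End k V)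
    (B : Module.Basis (Σ h : Fin m, Fin (nh h) × Fin (d h)) k V)
    (hB : ∀ (h : Fin m) (i : Fin (nh h)) (j : Fin (d h)),
      x (B ⟨h, (i, j)⟩) =
        if hj : 0 < (j : ℕ) then
          B ⟨h, (i, ⟨(j : ℕ) - 1, Nat.lt_of_le_of_lt (Nat.sub_le _ _) j.isLt⟩)⟩
        else 0)
    (t : ℕ) (h : Fin m) (i : Fin (nh h)) (j : Fin (d h)) :
    (x ^ t) (B ⟨h, (i, j)⟩) =
      if ht : t ≤ (j : ℕ) then
        B ⟨h, (i, ⟨(j : ℕ) - t, Nat.lt_of_le_of_lt (Nat.sub_le _ _) j.isLt⟩)⟩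
      else 0 := by
  induction t generalizing j with
  | zero => simp
  | succ t ih =>
    have hstep : (x ^ (t + 1)) (B ⟨h, (i, j)⟩) = x ((x ^ t) (B ⟨h, (i, j)⟩)) := by
      rw [pow_succ']
      rfl
    rw [hstep, ih]
    by_cases ht : t ≤ (j : ℕ)
    · rw [dif_pos ht, hB]
      by_cases h0 : 0 < (j : ℕ) - t
      · rw [dif_pos h0, dif_pos (by omega)]
        exact congrArg B (sig_eq_iff.mpr ⟨rfl, rfl, by simp only [Fin.val_mk]; omega⟩)
      · rw [dif_neg h0, dif_neg (by omega)]
    · rw [dif_neg ht, map_zero, dif_neg (by omega)]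

private lemma repr_pow_apply (x : Module.End k V)
    (B : Module.Basis (Σ h : Fin m, Fin (nh h) × Fin (d h)) k V)
    (hB : ∀ (h : Fin m) (i : Fin (nh h)) (j : Fin (d h)),
      x (B ⟨h, (i, j)⟩) =
        if hj : 0 < (j : ℕ) then
          B ⟨h, (i, ⟨(j : ℕ) - 1, Nat.lt_of_le_of_lt (Nat.sub_le _ _) j.isLt⟩)⟩
        else 0)
    (t : ℕ) (w : V) (h' : Fin m) (i' : Fin (nh h')) (j' : Fin (d h')) :
    B.repr ((x ^ t) w) ⟨h', (i', j')⟩ =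
      if hb : (j' : ℕ) + t < d h' then
        B.repr w ⟨h', (i', ⟨(j' : ℕ) + t, hb⟩)⟩
      else 0 := by
  classical
  have key : (B.coord ⟨h', (i', j')⟩) ∘ₗ (x ^ t : Module.End k V) =
      if hlt : (j' : ℕ) + t < d h' then B.coord ⟨h', (i', ⟨(j' : ℕ) + t, hlt⟩)⟩ else 0 := by
    apply B.ext
    rintro ⟨h, i, j⟩
    rw [LinearMap.comp_apply, pow_apply_basis x B hB]
    by_cases h1 : t ≤ (j : ℕ)
    · rw [dif_pos h1, Module.Basis.coord_apply, Module.Basis.repr_self_apply]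
      by_cases h2 : (j' : ℕ) + t < d h'
      · rw [dif_pos h2, Module.Basis.coord_apply, Module.Basis.repr_self_apply]
        refine if_congr ?_ rfl rfl
        simp only [sig_eq_iff, Fin.val_mk]
        constructor
        · rintro ⟨rfl, e1, e2⟩
          exact ⟨rfl, e1, by omega⟩
        · rintro ⟨rfl, e1, e2⟩
          exact ⟨rfl, e1, by omega⟩
      · rw [dif_neg h2]
        have hne : ¬((⟨h, (i, ⟨(j : ℕ) - t, Nat.lt_of_le_of_lt (Nat.sub_le _ _) j.isLt⟩)⟩ :
            Σ h : Fin m, Fin (nh h) × Fin (d h)) = ⟨h', (i', j')⟩) := by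
          intro hA
          obtain ⟨rfl, -, e⟩ := sig_eq_iff.mp hA
          simp only [Fin.val_mk] at e
          omega
        rw [if_neg hne]
        rfl
    · rw [dif_neg h1, map_zero]
      by_cases h2 : (j' : ℕ) + t < d h'
      · rw [dif_pos h2, Module.Basis.coord_apply, Module.Basis.repr_self_apply]
        have hne : ¬((⟨h, (i, j)⟩ : Σ h : Fin m, Fin (nh h) × Fin (d h)) =
            ⟨h', (i', ⟨(j' : ℕ) + t, h2⟩)⟩) := by
          intro hA
          obtain ⟨rfl, -, e⟩ := sig_eq_iff.mp hA
          simp only [Fin.val_mk] at e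
          omega
        rw [if_neg hne]
      · rw [dif_neg h2]
        rfl
  have hkw := LinearMap.congr_fun key w
  rw [LinearMap.comp_apply, Module.Basis.coord_apply] at hkw
  rw [hkw]
  by_cases h2 : (j' : ℕ) + t < d h'
  · rw [dif_pos h2, dif_pos h2, Module.Basis.coord_apply]
  · rw [dif_neg h2, dif_neg h2]
    rfl

private def gfun (d nh : Fin m → ℕ) : (Σ h : Fin m, Fin (nh h) × Fin (d h)) → ℕ ×ₗ Fin m :=
  fun a => toLex ((a.2.2 : ℕ), a.1)

@[simp] private lemma gfun_apply (d nh : Fin m → ℕ) (h : Fin m) (i : Fin (nh h))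
    (j : Fin (d h)) : gfun d nh ⟨h, (i, j)⟩ = toLex ((j : ℕ), h) := rfl

end Aux

/-- `x` nilpotent with Jordan basis indexed by blocks: the Jordan type has
distinct part sizes `d 0 > d 1 > ...` with multiplicities `nh h`, index set
`I_h ≅ Fin (nh h)`.  For `y` commuting with `x`, `det y = ∏_h det(M_h)^{d h}`, where
`M_h` is the matrix of leading coefficients `c_{i,λ_i}^{r,λ_r}(y)` for `i, r ∈ I_h`;
in particular `y` is invertible iff each `M_h` is. -/
theorem stmt5 (k : Type*) [Field k] (V : Type*) [AddCommGroup V] [Module k V]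
    (x y : Module.End k V) (m : ℕ) (d nh : Fin m → ℕ)
    (hd : StrictAnti d) (hdpos : ∀ h, 0 < d h) (hnpos : ∀ h, 0 < nh h)
    (B : Module.Basis (Σ h : Fin m, Fin (nh h) × Fin (d h)) k V)
    (hB : ∀ (h : Fin m) (i : Fin (nh h)) (j : Fin (d h)),
      x (B ⟨h, (i, j)⟩) =
        if hj : 0 < (j : ℕ) then
          B ⟨h, (i, ⟨(j : ℕ) - 1, Nat.lt_of_le_of_lt (Nat.sub_le _ _) j.isLt⟩)⟩
        else 0)
    (hcomm : x * y = y * x)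
    (c : (Σ h : Fin m, Fin (nh h) × Fin (d h)) → (Σ h : Fin m, Fin (nh h) × Fin (d h)) → k)
    (hc : ∀ a b, c a b = B.repr (y (B a)) b)
    (M : ∀ h : Fin m, Matrix (Fin (nh h)) (Fin (nh h)) k)
    (hM : ∀ (h : Fin m) (i r : Fin (nh h)),
      M h i r = c ⟨h, (i, ⟨d h - 1, Nat.sub_lt (hdpos h) one_pos⟩)⟩
                  ⟨h, (r, ⟨d h - 1, Nat.sub_lt (hdpos h) one_pos⟩)⟩) :
    LinearMap.det (y : V →ₗ[k] V) = ∏ h : Fin m, (M h).det ^ (d h) ∧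
    (IsUnit y ↔ ∀ h : Fin m, IsUnit (M h)) := by
  classical
  -- commuting with powers
  have hxy : ∀ (t : ℕ) (v : V), y ((x ^ t) v) = (x ^ t) (y v) := by
    intro t v
    have hco : Commute (x ^ t) y := Commute.pow_left hcomm t
    calc y ((x ^ t) v) = (y * x ^ t) v := rfl
      _ = (x ^ t * y) v := by rw [← hco.eq]
      _ = (x ^ t) (y v) := rfl
  -- shift to top
  have hshift : ∀ (h : Fin m) (i : Fin (nh h)) (j : Fin (d h)) (h' : Fin m) (i' : Fin (nh h'))
      (j' : Fin (d h')),
      c ⟨h, (i, j)⟩ ⟨h', (i', j')⟩ =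
        if hb : (j' : ℕ) + (d h - 1 - (j : ℕ)) < d h' then
          c ⟨h, (i, ⟨d h - 1, Nat.sub_lt (hdpos h) one_pos⟩)⟩
            ⟨h', (i', ⟨(j' : ℕ) + (d h - 1 - (j : ℕ)), hb⟩)⟩
        else 0 := by
    intro h i j h' i' j'
    have hjlt := j.isLt
    have e1 : B ⟨h, (i, j)⟩ =
        (x ^ (d h - 1 - (j : ℕ))) (B ⟨h, (i, ⟨d h - 1, Nat.sub_lt (hdpos h) one_pos⟩)⟩) := by
      rw [pow_apply_basis x B hB, dif_pos (by simp only [Fin.val_mk]; omega)]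
      congr 1
      exact sig_eq_iff.mpr ⟨rfl, rfl, by simp only [Fin.val_mk]; omega⟩
    rw [hc, e1, hxy, repr_pow_apply x B hB]
    by_cases h2 : (j' : ℕ) + (d h - 1 - (j : ℕ)) < d h'
    · rw [dif_pos h2, dif_pos h2, hc]
    · rw [dif_neg h2, dif_neg h2]
  -- vanishing below the diagonal
  have hvanish : ∀ (h : Fin m) (i : Fin (nh h)) (j : Fin (d h)) (h' : Fin m) (i' : Fin (nh h'))
      (j' : Fin (d h')), (j : ℕ) < (j' : ℕ) → c ⟨h, (i, j)⟩ ⟨h', (i', j')⟩ = 0 := by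
    intro h i j h' i' j' hlt
    have hj'lt := j'.isLt
    have e0 : (x ^ ((j : ℕ) + 1)) (B ⟨h, (i, j)⟩) = 0 := by
      rw [pow_apply_basis x B hB, dif_neg (by omega)]
    have e1 : (x ^ ((j : ℕ) + 1)) (y (B ⟨h, (i, j)⟩)) = 0 := by
      rw [← hxy, e0, map_zero]
    have e2 := repr_pow_apply x B hB ((j : ℕ) + 1) (y (B ⟨h, (i, j)⟩)) h' i'
      ⟨(j' : ℕ) - ((j : ℕ) + 1), by omega⟩
    rw [e1, dif_pos (by simp only [Fin.val_mk]; omega)] at e2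
    simp only [map_zero, Finsupp.coe_zero, Pi.zero_apply] at e2
    rw [hc]
    have e3 : (⟨h', (i', j')⟩ : Σ h : Fin m, Fin (nh h) × Fin (d h)) =
        ⟨h', (i', ⟨(j' : ℕ) - ((j : ℕ) + 1) + ((j : ℕ) + 1), by omega⟩)⟩ :=
      sig_eq_iff.mpr ⟨rfl, rfl, by simp only [Fin.val_mk]; omega⟩
    rw [e3]
    exact e2.symm
  -- the matrix of y
  set C : Matrix (Σ h : Fin m, Fin (nh h) × Fin (d h)) (Σ h : Fin m, Fin (nh h) × Fin (d h)) k :=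
    LinearMap.toMatrix B B y with hCdef
  have hC : ∀ a b, C a b = c b a := by
    intro a b
    rw [hCdef, LinearMap.toMatrix_apply, hc]
  have hBT : C.BlockTriangular (gfun d nh) := by
    rintro ⟨ha, ia, ja⟩ ⟨hb, ib, jb⟩ hlt
    rw [hC]
    simp only [gfun_apply] at hlt
    rw [Prod.Lex.lt_iff] at hlt
    simp only [ofLex_toLex] at hlt
    rcases hlt with h1 | ⟨h1, h2⟩
    · exact hvanish _ _ _ _ _ _ h1
    · have hda := hd h2
      have := ja.isLt
      have := jb.isLt
      rw [hshift, dif_neg (by omega)]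
  -- determinant computation
  have hdet : C.det = ∏ h : Fin m, (M h).det ^ (d h) := by
    rw [hBT.det]
    have hblock : ∀ p ∈ (univ : Finset (Σ h : Fin m, Fin (nh h) × Fin (d h))).image (gfun d nh),
        (C.toSquareBlock (gfun d nh) p).det = (M (ofLex p).2).det := by
      intro p hp
      obtain ⟨⟨h0, i0, j0⟩, -, rfl⟩ := Finset.mem_image.mp hp
      have hj0 : (j0 : ℕ) < d h0 := j0.isLt
      have hfeq : ∀ i : Fin (nh h0),
          gfun d nh ⟨h0, (i, j0)⟩ = gfun d nh ⟨h0, (i0, j0)⟩ := fun _ => rfl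
      set f : Fin (nh h0) → {a : Σ h : Fin m, Fin (nh h) × Fin (d h) //
          gfun d nh a = gfun d nh ⟨h0, (i0, j0)⟩} := fun i => ⟨⟨h0, (i, j0)⟩, hfeq i⟩ with hf
      have hbij : Function.Bijective f := by
        constructor
        · intro i1 i2 e
          have he := congrArg (fun z => z.1) e
          simp only [hf] at he
          obtain ⟨-, e2, -⟩ := sig_eq_iff.mp he
          exact Fin.ext e2
        · rintro ⟨⟨ha, ia, ja⟩, hpa⟩
          simp only [gfun_apply] at hpa
          have hpp : ((ja : ℕ), ha) = ((j0 : ℕ), h0) := toLex_inj.mp hpa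
          have e1 : (ja : ℕ) = (j0 : ℕ) := congrArg Prod.fst hpp
          have e2 : ha = h0 := congrArg Prod.snd hpp
          subst e2
          refine ⟨ia, Subtype.ext ?_⟩
          exact sig_eq_iff.mpr ⟨rfl, rfl, e1.symm⟩
      rw [← Matrix.det_submatrix_equiv_self (Equiv.ofBijective f hbij)
        (C.toSquareBlock (gfun d nh) _)]
      have hsub : (C.toSquareBlock (gfun d nh) (gfun d nh ⟨h0, (i0, j0)⟩)).submatrix
          (Equiv.ofBijective f hbij) (Equiv.ofBijective f hbij) = (M h0).transpose := by
        ext i r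
        simp only [Matrix.submatrix_apply, Equiv.ofBijective_apply, Matrix.toSquareBlock_def, hf,
          Matrix.of_apply, Matrix.transpose_apply]
        rw [hC, hshift, dif_pos (by omega), hM]
        have e4 : (⟨h0, (i, ⟨(j0 : ℕ) + (d h0 - 1 - (j0 : ℕ)), by omega⟩)⟩ :
            Σ h : Fin m, Fin (nh h) × Fin (d h)) =
            ⟨h0, (i, ⟨d h0 - 1, Nat.sub_lt (hdpos h0) one_pos⟩)⟩ :=
          sig_eq_iff.mpr ⟨rfl, rfl, by simp only [Fin.val_mk]; omega⟩
        rw [e4]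
      rw [hsub, Matrix.det_transpose]
      rfl
    rw [Finset.prod_congr rfl hblock]
    have himg : (univ : Finset (Σ h : Fin m, Fin (nh h) × Fin (d h))).image (gfun d nh) =
        (univ : Finset (Σ h : Fin m, Fin (d h))).image (fun q => toLex ((q.2 : ℕ), q.1)) := by
      ext p
      simp only [Finset.mem_image, Finset.mem_univ, true_and]
      constructor
      · rintro ⟨⟨h0, i0, j0⟩, rfl⟩
        exact ⟨⟨h0, j0⟩, rfl⟩
      · rintro ⟨⟨h0, j0⟩, rfl⟩
        exact ⟨⟨h0, (⟨0, hnpos h0⟩, j0)⟩, rfl⟩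
    rw [himg, Finset.prod_image]
    · rw [← Finset.univ_sigma_univ, Finset.prod_sigma]
      simp only [ofLex_toLex]
      refine Finset.prod_congr rfl fun h _ => ?_
      show (∏ _x : Fin (d h), (M h).det) = (M h).det ^ d h
      rw [Finset.prod_const, Finset.card_univ, Fintype.card_fin]
    · rintro ⟨h1, j1⟩ - ⟨h2, j2⟩ - e
      have hpp : ((j1 : ℕ), h1) = ((j2 : ℕ), h2) := toLex_inj.mp e
      have e1 : (j1 : ℕ) = (j2 : ℕ) := congrArg Prod.fst hpp
      have e2 : h1 = h2 := congrArg Prod.snd hpp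
      subst e2
      obtain rfl : j1 = j2 := Fin.ext e1
      rfl
  have hdet' : LinearMap.det (y : V →ₗ[k] V) = ∏ h : Fin m, (M h).det ^ (d h) := by
    rw [← LinearMap.det_toMatrix B, ← hCdef, hdet]
  refine ⟨hdet', ?_⟩
  -- invertibility
  have hu : IsUnit y ↔ IsUnit C := by
    constructor
    · intro h
      have := h.map (LinearMap.toMatrixAlgEquiv B)
      simpa [LinearMap.toMatrixAlgEquiv, hCdef] using this
    · intro h
      have := h.map (LinearMap.toMatrixAlgEquiv B).symm
      simpa [LinearMap.toMatrixAlgEquiv, hCdef] using this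
  rw [hu, Matrix.isUnit_iff_isUnit_det, isUnit_iff_ne_zero, hdet]
  rw [Finset.prod_ne_zero_iff]
  refine ⟨fun H h => ?_, fun H h _ => ?_⟩
  · have := H h (Finset.mem_univ h)
    rw [pow_ne_zero_iff (hdpos h).ne'] at this
    rw [Matrix.isUnit_iff_isUnit_det, isUnit_iff_ne_zero]
    exact this
  · rw [pow_ne_zero_iff (hdpos h).ne']
    have := H h
    rw [Matrix.isUnit_iff_isUnit_det, isUnit_iff_ne_zero] at this
    exact this
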